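/- Let 0 < a < 2 and K = [−a, a]. Then every element x of J_0(K) is of the form x = 2·cos(2πj/k) for some integers j, k with gcd(j, k) = 1 and 1 ≤ k ≤ 2π/arccos(a/2); that is, J_0([−a,a]) ⊆ ⋃_{1 ≤ k ≤ 2π/arccos(a/2)} { 2cos(2πj/k) : gcd(j,k) = 1 }. -/

import Mathlib

open Polynomial Real
open IntermediateField
set_option maxHeartbeats 1000000

lemma abs_eq_one_of_quad (y : ℝ) (b : ℂ) (hy : |y| < 2) (hb : b^2 - y*b + 1 = 0) :
    ‖b‖ = 1 := by
  have hc : (starRingEnd ℂ) b ^ 2 - (y:ℂ) * (starRingEnd ℂ) b + 1 = 0 := by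
    have h := congrArg (starRingEnd ℂ) hb
    simpa [map_pow, Complex.conj_ofReal] using h
  have hfac : ((starRingEnd ℂ) b - b) * ((starRingEnd ℂ) b + b - y) = 0 := by
    linear_combination hc - hb
  rcases mul_eq_zero.mp hfac with h | h
  · have hreal : (starRingEnd ℂ) b = b := by linear_combination h
    obtain ⟨r, rfl⟩ := Complex.conj_eq_iff_real.mp hreal
    have hr : r^2 - y*r + 1 = 0 := by
      have : ((r^2 - y*r + 1 : ℝ) : ℂ) = 0 := by push_cast; linear_combination hb
      exact_mod_cast this
    exfalso
    obtain ⟨hy1, hy2⟩ := abs_lt.mp hy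
    rcases lt_trichotomy r 0 with h0 | h0 | h0
    · nlinarith [sq_nonneg (r+1), mul_pos (by linarith : (0:ℝ) < 2 + y) (by linarith : (0:ℝ) < -r)]
    · rw [h0] at hr; norm_num at hr
    · nlinarith [sq_nonneg (r-1), mul_pos (by linarith : (0:ℝ) < 2 - y) h0]
  · have h1 : b * (starRingEnd ℂ) b = 1 := by linear_combination b * h - hb
    have h2 : (Complex.normSq b : ℂ) = 1 := by rw [← Complex.mul_conj]; exact h1
    have h3 : Complex.normSq b = 1 := by exact_mod_cast h2
    rw [Complex.norm_def, h3, Real.sqrt_one]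

/-- The sup norm of a real polynomial on a set `K ⊆ ℝ`. -/
noncomputable def supNormOn (K : Set ℝ) (P : Polynomial ℝ) : ℝ :=
  sSup ((fun x => |P.eval x|) '' K)

/-- The Fekete kernel `J(K)`. -/
def feketeKernel (K : Set ℝ) : Set ℝ :=
  {x | x ∈ K ∧ ∀ P : Polynomial ℤ,
    supNormOn K (P.map (Int.castRingHom ℝ)) < 1 → Polynomial.aeval x P = 0}

/-- `J_0(K)`: elements of `J(K)` that are algebraic integers all of whose complex conjugates
are real and belong to `K`. -/
def feketeKernel0 (K : Set ℝ) : Set ℝ :=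
  {α | α ∈ feketeKernel K ∧ IsIntegral ℤ α ∧
    ∀ z : ℂ, Polynomial.aeval z (minpoly ℤ α) = 0 → ∃ y ∈ K, (y : ℂ) = z}

/-- For `0 < a < 2`, every element of `J_0([-a,a])` is of the form `2 cos(2πj/k)` with
`gcd(j,k) = 1` and `1 ≤ k ≤ 2π / arccos(a/2)`. -/
theorem feketeKernel0_Icc_subset (a : ℝ) (ha0 : 0 < a) (ha2 : a < 2)
    (x : ℝ) (hx : x ∈ feketeKernel0 (Set.Icc (-a) a)) :
    ∃ (j : ℤ) (k : ℕ), 1 ≤ k ∧ (k : ℝ) ≤ 2 * π / arccos (a / 2) ∧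
      Int.gcd j (k : ℤ) = 1 ∧ x = 2 * Real.cos (2 * π * (j : ℝ) / (k : ℝ)) := by
  obtain ⟨⟨hxK, _hJ⟩, hint, hconj⟩ := hx
  obtain ⟨hx1, hx2⟩ := Set.mem_Icc.mp hxK
  have hxlt2 : |x| < 2 := lt_of_le_of_lt (abs_le.mpr ⟨by linarith, hx2⟩) ha2
  have hsq : (0:ℝ) ≤ 1 - (x/2)^2 := by
    obtain ⟨h1, h2⟩ := abs_lt.mp hxlt2; nlinarith
  set s : ℝ := Real.sqrt (1 - (x/2)^2) with hs
  have hs2 : s^2 = 1 - (x/2)^2 := Real.sq_sqrt hsq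
  set β : ℂ := (x/2 : ℝ) + s * Complex.I with hβ
  have hs2' : (s:ℂ)^2 = 1 - ((x:ℂ)/2)^2 := by
    rw [← Complex.ofReal_pow, hs2]; push_cast; ring
  have hquad : β^2 - (x:ℂ)*β + 1 = 0 := by
    rw [hβ]; push_cast
    linear_combination Complex.I^2 * hs2' + (1 - (x:ℂ)^2/4) * Complex.I_sq
  have hβre : β.re = x/2 := by simp [hβ]
  -- integrality
  have hxC : IsIntegral ℤ (x:ℂ) := by
    have := hint.map ((Algebra.ofId ℝ ℂ).restrictScalars ℤ)
    simpa using this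
  have hβint : IsIntegral ℤ β := by
    have h1 : IsIntegral (integralClosure ℤ ℂ) β := by
      refine ⟨X^2 - C (⟨(x:ℂ), hxC⟩ : integralClosure ℤ ℂ) * X + 1, ?_, ?_⟩
      · have h2 : (X^2 - C (⟨(x:ℂ), hxC⟩ : integralClosure ℤ ℂ) * X + 1 : Polynomial _)
            = X^(1+1) + (C (-(⟨(x:ℂ), hxC⟩ : integralClosure ℤ ℂ)) * X + C 1) := by
          rw [C_neg, C_1]; ring
        rw [h2]
        exact monic_X_pow_add (lt_of_le_of_lt degree_linear_le (by norm_num))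
      · simp [Polynomial.eval₂_sub, Polynomial.eval₂_add, Polynomial.eval₂_mul]
        exact hquad
    exact isIntegral_trans β h1
  have hβq : IsIntegral ℚ β := hβint.tower_top
  haveI := IntermediateField.adjoin.finiteDimensional hβq
  haveI : NumberField ℚ⟮β⟯ := ⟨⟩
  have hβ0 : β ≠ 0 := by
    intro h; rw [h] at hquad; norm_num at hquad
  set gen : ℚ⟮β⟯ := IntermediateField.AdjoinSimple.gen ℚ β with hgendef
  have hgenβ : (algebraMap ℚ⟮β⟯ ℂ) gen = β := IntermediateField.AdjoinSimple.algebraMap_gen ℚ β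
  have hinj : Function.Injective (algebraMap ℚ⟮β⟯ ℂ) := (algebraMap ℚ⟮β⟯ ℂ).injective
  have hgenint : IsIntegral ℤ gen := by
    refine (isIntegral_algHom_iff (IsScalarTower.toAlgHom ℤ ℚ⟮β⟯ ℂ) hinj).mp ?_
    show IsIntegral ℤ (algebraMap ℚ⟮β⟯ ℂ gen)
    rw [hgenβ]; exact hβint
  set α' : ℚ⟮β⟯ := gen + gen⁻¹ with hα'def
  have himg : (algebraMap ℚ⟮β⟯ ℂ) α' = (x:ℂ) := by
    rw [hα'def, map_add, map_inv₀, hgenβ]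
    field_simp
    linear_combination hquad
  have hminα' : minpoly ℚ α' = minpoly ℚ x := by
    have h1 : minpoly ℚ ((algebraMap ℚ⟮β⟯ ℂ) α') = minpoly ℚ α' :=
      minpoly.algebraMap_eq hinj α'
    have h2 : minpoly ℚ ((algebraMap ℝ ℂ) x) = minpoly ℚ x :=
      minpoly.algebraMap_eq (algebraMap ℝ ℂ).injective x
    rw [← h1, himg, ← h2]; rfl
  have hquadgen : gen^2 - α' * gen + 1 = 0 := by
    apply hinj
    rw [map_add, map_sub, map_mul, map_pow, map_one, map_zero, hgenβ, himg]
    exact hquad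
  have hrootQ : ∀ z : ℂ, Polynomial.aeval z (minpoly ℚ x) = 0 →
      ∃ y ∈ Set.Icc (-a) a, (y : ℂ) = z := by
    intro z hz
    apply hconj
    have hmin : minpoly ℚ x = (minpoly ℤ x).map (algebraMap ℤ ℚ) :=
      minpoly.isIntegrallyClosed_eq_field_fractions' ℚ hint
    rwa [hmin, Polynomial.aeval_map_algebraMap] at hz
  have hnorm : ∀ φ : ℚ⟮β⟯ →+* ℂ, ‖φ gen‖ = 1 := by
    intro φ
    have hφα : Polynomial.aeval (φ.toRatAlgHom α') (minpoly ℚ x) = 0 := by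
      rw [← hminα', Polynomial.aeval_algHom_apply, minpoly.aeval, map_zero]
    obtain ⟨y, hyI, hyz⟩ := hrootQ _ hφα
    have hb : (φ gen)^2 - (y:ℂ)*(φ gen) + 1 = 0 := by
      have h3 := congrArg φ hquadgen
      rw [map_add, map_sub, map_mul, map_pow, map_one, map_zero] at h3
      rw [hyz]
      exact h3
    have hy2 : |y| < 2 := by
      obtain ⟨hy1, hy2⟩ := Set.mem_Icc.mp hyI
      rw [abs_lt]; constructor <;> linarith
    exact abs_eq_one_of_quad y (φ gen) hy2 hb
  obtain ⟨n, hn, hgenpow⟩ :=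
    NumberField.Embeddings.pow_eq_one_of_norm_eq_one ℚ⟮β⟯ ℂ hgenint hnorm
  have hβn : β^n = 1 := by
    have h4 := congrArg (algebraMap ℚ⟮β⟯ ℂ) hgenpow
    rwa [map_pow, map_one, hgenβ] at h4
  haveI : NeZero n := ⟨hn.ne'⟩
  obtain ⟨m, hmlt, hβexp⟩ := (Complex.isPrimitiveRoot_exp n hn.ne').eq_pow_of_pow_eq_one hβn
  have hβexp' : β = Complex.exp (2*π*Complex.I*((m:ℂ)/(n:ℂ))) := by
    rw [← hβexp, ← Complex.exp_nat_mul]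
    congr 1
    push_cast; ring
  have hxcos : x = 2 * Real.cos (2*π*m/n) := by
    have h1 : β.re = Real.cos (2*π*m/n) := by
      rw [hβexp']
      have h2 : (2*π*Complex.I*((m:ℂ)/(n:ℂ))) = ((2*π*m/n : ℝ):ℂ) * Complex.I := by
        push_cast; ring
      rw [h2, Complex.exp_ofReal_mul_I_re]
    rw [← h1, hβre]; ring
  -- reduce the fraction m/n
  set g : ℕ := Nat.gcd m n with hgdef
  have hgpos : 0 < g := Nat.gcd_pos_of_pos_right m hn
  set j : ℕ := m / g with hjdef
  set k : ℕ := n / g with hkdef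
  have hkpos : 0 < k := Nat.div_pos (Nat.le_of_dvd hn (Nat.gcd_dvd_right m n)) hgpos
  have cop : Nat.Coprime j k := Nat.coprime_div_gcd_div_gcd hgpos
  have hmj : m = g * j := (Nat.mul_div_cancel' (Nat.gcd_dvd_left m n)).symm
  have hnk : n = g * k := (Nat.mul_div_cancel' (Nat.gcd_dvd_right m n)).symm
  have hfrac : (m:ℝ)/(n:ℝ) = (j:ℝ)/(k:ℝ) := by
    rw [hmj, hnk]
    push_cast
    rw [mul_div_mul_left]
    exact_mod_cast hgpos.ne'
  have hfracC : (m:ℂ)/(n:ℂ) = (j:ℂ)/(k:ℂ) := by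
    have := congrArg (fun t : ℝ => (t : ℂ)) hfrac
    push_cast at this
    exact this
  have hβexp2 : β = Complex.exp (2*π*Complex.I*((j:ℂ)/(k:ℂ))) := by rw [hβexp', hfracC]
  have primβ : IsPrimitiveRoot β k := by
    rw [hβexp2]
    exact Complex.isPrimitiveRoot_exp_of_coprime j k hkpos.ne' cop
  have hxcos2 : x = 2 * Real.cos (2*π*j/k) := by
    rw [hxcos]
    congr 2
    rw [mul_div_assoc, mul_div_assoc, hfrac]
  -- rule out k = 1, 2
  have hk3 : 3 ≤ k := by
    by_contra hcon
    push_neg at hcon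
    interval_cases k
    · have h5 : β = 1 := by simpa using primβ.pow_eq_one
      rw [h5] at hβre
      simp at hβre
      linarith
    · have h5 : β^2 = 1 := primβ.pow_eq_one
      have h6 : (β - 1) * (β + 1) = 0 := by linear_combination h5
      rcases mul_eq_zero.mp h6 with h7 | h7
      · have h8 : β = 1 := by linear_combination h7
        rw [h8] at hβre; simp at hβre; linarith
      · have h8 : β = -1 := by linear_combination h7
        rw [h8] at hβre; simp at hβre; linarith
  -- conjugate 2cos(2π/k)
  set ζ : ℂ := Complex.exp (2*π*Complex.I/(k:ℂ)) with hζdef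
  have hζprim : IsPrimitiveRoot ζ k := Complex.isPrimitiveRoot_exp k hkpos.ne'
  have hcyc : minpoly ℚ β = Polynomial.cyclotomic k ℚ :=
    (Polynomial.cyclotomic_eq_minpoly_rat primβ hkpos).symm
  have hζroot : ζ ∈ (minpoly ℚ β).aroots ℂ := by
    rw [Polynomial.mem_aroots]
    refine ⟨minpoly.ne_zero hβq, ?_⟩
    rw [hcyc, Polynomial.aeval_def, ← Polynomial.eval_map, Polynomial.map_cyclotomic]
    exact hζprim.isRoot_cyclotomic hkpos
  set σ := (IntermediateField.algHomAdjoinIntegralEquiv ℚ hβq).symm ⟨ζ, hζroot⟩ with hσdef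
  have hσgen : σ gen = ζ :=
    IntermediateField.algHomAdjoinIntegralEquiv_symm_apply_gen ℚ hβq ⟨ζ, hζroot⟩
  have hσα : σ α' = ζ + ζ⁻¹ := by rw [hα'def, map_add, map_inv₀, hσgen]
  have hσroot : Polynomial.aeval (σ α') (minpoly ℚ x) = 0 := by
    rw [← hminα', Polynomial.aeval_algHom_apply, minpoly.aeval, map_zero]
  obtain ⟨y, hyI, hyz⟩ := hrootQ _ hσroot
  have hζval : ζ + ζ⁻¹ = ((2 * Real.cos (2*π/(k:ℝ)) : ℝ) : ℂ) := by
    rw [hζdef, ← Complex.exp_neg]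
    have h2 : (2*π*Complex.I/(k:ℂ)) = ((2*π/(k:ℝ) : ℝ):ℂ) * Complex.I := by
      push_cast; ring
    have h3 : (-(((2*π/(k:ℝ) : ℝ):ℂ) * Complex.I)) = ((-(2*π/(k:ℝ)) : ℝ):ℂ) * Complex.I := by
      push_cast; ring
    rw [h2, h3, Complex.exp_mul_I, Complex.exp_mul_I, ← Complex.ofReal_cos,
      ← Complex.ofReal_sin, ← Complex.ofReal_cos, ← Complex.ofReal_sin,
      Real.cos_neg, Real.sin_neg]
    push_cast
    ring
  have hy : y = 2 * Real.cos (2*π/(k:ℝ)) := by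
    have h4 : (y:ℂ) = ((2 * Real.cos (2*π/(k:ℝ)) : ℝ) : ℂ) := by
      rw [hyz, hσα, hζval]
    exact_mod_cast h4
  have hcosle : Real.cos (2*π/(k:ℝ)) ≤ a/2 := by
    have h5 := (Set.mem_Icc.mp hyI).2
    rw [hy] at h5; linarith
  have ht0 : 0 ≤ 2*π/(k:ℝ) := by positivity
  have hk2 : (2:ℝ) ≤ (k:ℝ) := by exact_mod_cast le_trans (by norm_num) hk3
  have htπ : 2*π/(k:ℝ) ≤ π := by
    rw [div_le_iff₀ (by positivity)]
    nlinarith [Real.pi_pos]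
  have harc : Real.arccos (a/2) ≤ 2*π/(k:ℝ) := by
    have h9 : Real.arccos (a/2) ≤ Real.arccos (Real.cos (2*π/(k:ℝ))) := by
      simp only [Real.arccos_eq_pi_div_two_sub_arcsin]
      have := Real.monotone_arcsin hcosle
      linarith
    rwa [Real.arccos_cos ht0 htπ] at h9
  have harcpos : 0 < Real.arccos (a/2) := Real.arccos_pos.mpr (by linarith)
  have hkbound : (k:ℝ) ≤ 2*π/Real.arccos (a/2) := by
    rw [le_div_iff₀ harcpos]
    calc (k:ℝ) * Real.arccos (a/2) ≤ (k:ℝ) * (2*π/(k:ℝ)) :=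
          mul_le_mul_of_nonneg_left harc (by positivity)
      _ = 2*π := by field_simp
  refine ⟨(j:ℤ), k, hkpos, hkbound, ?_, ?_⟩
  · rw [Int.gcd_natCast_natCast]; exact cop
  · exact_mod_cast hxcos2
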